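/- For a fractal string Ω ⊆ [0,1] that is a countable union of disjoint open intervals with lengths ℓ_j summing to at most 1, the Minkowski dimension of the boundary ∂Ω equals inf{σ ∈ ℝ : Σ_j ℓ_j^σ < ∞}, provided ∂Ω = Ω^c in [0,1]. -/

import Mathlib

set_option maxHeartbeats 1000000


open MeasureTheory Filter Set
open scoped ENNReal

lemma aux_pointwise (ℓ σ : ℝ) (h0 : 0 < ℓ) (h1 : ℓ < 1) (hσ1 : σ < 1) :
    ENNReal.ofReal (ℓ ^ σ) ≤ ∑' k : ℕ,
      (if ℓ < (2:ℝ) ^ (-(k:ℝ)) then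
        ENNReal.ofReal ((2:ℝ) ^ (((k:ℝ)+1)*(1-σ))) * ENNReal.ofReal ℓ else 0) := by
  have hex : ∃ k : ℕ, (2:ℝ) ^ (-(k:ℝ)) ≤ ℓ := by
    obtain ⟨k, hk⟩ := exists_pow_lt_of_lt_one h0 (by norm_num : (1:ℝ)/2 < 1)
    refine ⟨k, le_of_lt ?_⟩
    calc (2:ℝ) ^ (-(k:ℝ)) = ((1:ℝ)/2) ^ k := by
          rw [Real.rpow_neg (by norm_num), Real.rpow_natCast, one_div, inv_pow]
      _ < ℓ := hk
  classical
  set K := Nat.find hex with hK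
  have hKle : (2:ℝ) ^ (-(K:ℝ)) ≤ ℓ := Nat.find_spec hex
  have hKpos : 0 < K := by
    rcases Nat.eq_zero_or_pos K with h | h
    · exfalso; rw [h] at hKle; simp at hKle; linarith
    · exact h
  have hKlt : ℓ < (2:ℝ) ^ (-((K-1:ℕ):ℝ)) := by
    have := Nat.find_min hex (Nat.sub_lt hKpos one_pos)
    push_neg at this; exact this
  refine le_trans ?_ (ENNReal.le_tsum (K-1))
  rw [if_pos hKlt, ← ENNReal.ofReal_mul (by positivity)]
  refine ENNReal.ofReal_le_ofReal ?_
  have hcast : ((K-1:ℕ):ℝ) + 1 = (K:ℝ) := by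
    rw [Nat.cast_sub hKpos]; push_cast; ring
  rw [hcast]
  calc ℓ ^ σ = ℓ ^ (σ - 1 + 1) := by congr 1; ring
    _ = ℓ ^ (σ - 1) * ℓ := Real.rpow_add_one h0.ne' _
    _ ≤ ((2:ℝ) ^ (-(K:ℝ))) ^ (σ - 1) * ℓ := by
        apply mul_le_mul_of_nonneg_right _ h0.le
        exact Real.rpow_le_rpow_of_nonpos (Real.rpow_pos_of_pos (by norm_num) _) hKle
          (by linarith)
    _ = (2:ℝ) ^ ((K:ℝ) * (1 - σ)) * ℓ := by
        rw [← Real.rpow_mul (by norm_num)]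
        ring_nf


/-- For a fractal string `Ω ⊆ [0,1]`, a countable disjoint union of open
intervals `(a j, b j)` with lengths summing to at most 1, whose boundary
equals its complement in `[0,1]`, the Minkowski dimension of `∂Ω`
(defined via the inner tube volumes `V(ε)`) equals the abscissa of
convergence `inf {σ : ∑_j ℓ_j^σ < ∞}` of the lengths. -/
theorem minkowski_dimension_eq_abscissa_of_convergence
    (a b : ℕ → ℝ) (hab : ∀ j, a j < b j)
    (hsub : (⋃ j, Ioo (a j) (b j)) ⊆ Icc 0 1)
    (hdisj : Pairwise (Function.onFun Disjoint (fun j => Ioo (a j) (b j))))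
    (hsum : Summable (fun j => b j - a j))
    (hsum1 : ∑' j, (b j - a j) ≤ 1)
    (hbd : frontier (⋃ j, Ioo (a j) (b j)) = Icc 0 1 \ ⋃ j, Ioo (a j) (b j)) :
    sInf {d : ℝ | 0 ≤ d ∧
        limsup (fun ε : ℝ =>
            volume {x ∈ ⋃ j, Ioo (a j) (b j) |
              Metric.infDist x (frontier (⋃ j, Ioo (a j) (b j))) < ε}
            * ENNReal.ofReal (ε ^ (d - 1)))
          (nhdsWithin 0 (Ioi 0)) < ⊤}
      = sInf {σ : ℝ | Summable (fun j => (b j - a j) ^ σ)} := by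
  set Ω := ⋃ j, Ioo (a j) (b j) with hΩ
  set F := frontier Ω with hFdef
  have hl : ∀ j, 0 < b j - a j := fun j => sub_pos.2 (hab j)
  have hle1 : ∀ j, b j - a j ≤ 1 := by
    intro j
    refine le_trans (Summable.le_tsum hsum j (fun k _ => (hl k).le)) hsum1
  have hlt1 : ∀ j, b j - a j < 1 := by
    intro j
    have h2 : b j - a j + (b (j+1) - a (j+1)) ≤ ∑' k, (b k - a k) := by
      have := Summable.sum_le_tsum {j, j+1} (fun k _ => (hl k).le) hsum
      rwa [Finset.sum_pair (by omega)] at this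
    have := hl (j+1)
    linarith
  have hnotmem : ∀ x : ℝ, (∃ j, x = a j ∨ x = b j) → x ∉ Ω := by
    rintro x ⟨j, hj⟩ hx
    rw [hΩ, mem_iUnion] at hx
    obtain ⟨k, hk⟩ := hx
    have hkj : k ≠ j := by
      rintro rfl
      rcases hj with rfl | rfl
      · exact lt_irrefl _ hk.1
      · exact lt_irrefl _ hk.2
    -- produce a point in both intervals
    rcases hj with rfl | rfl
    · -- a j ∈ Ioo (a k) (b k); midpoint of (a j, min (b j) (b k))
      set x := (a j + min (b j) (b k)) / 2
      have h1 : a j < min (b j) (b k) := lt_min (hab j) hk.2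
      have hx1 : x ∈ Ioo (a j) (b j) :=
        ⟨by simp only [x]; linarith, by have := min_le_left (b j) (b k); simp only [x]; linarith⟩
      have hx2 : x ∈ Ioo (a k) (b k) :=
        ⟨by have := hk.1; have := min_le_right (b j) (b k); simp only [x]; linarith,
         by have := min_le_right (b j) (b k); simp only [x]; linarith⟩
      exact (hdisj hkj).ne_of_mem hx2 hx1 rfl
    · set x := (max (a j) (a k) + b j) / 2
      have h1 : max (a j) (a k) < b j := max_lt (hab j) hk.1
      have hx1 : x ∈ Ioo (a j) (b j) :=
        ⟨by have := le_max_left (a j) (a k); simp only [x]; linarith,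
         by simp only [x]; linarith⟩
      have hx2 : x ∈ Ioo (a k) (b k) :=
        ⟨by have := le_max_right (a j) (a k); simp only [x]; linarith,
         by have := hk.2; have := le_max_right (a j) (a k); simp only [x]; linarith⟩
      exact (hdisj hkj).ne_of_mem hx2 hx1 rfl
  have hmemIcc : ∀ j, a j ∈ Icc (0:ℝ) 1 ∧ b j ∈ Icc (0:ℝ) 1 := by
    intro j
    have h1 : Icc (a j) (b j) ⊆ Icc 0 1 := by
      rw [← closure_Ioo (hab j).ne]
      exact closure_minimal (subset_trans (subset_iUnion (fun i => Ioo (a i) (b i)) j : _ ⊆ Ω) hsub) isClosed_Icc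
    exact ⟨h1 ⟨le_refl _, (hab j).le⟩, h1 ⟨(hab j).le, le_refl _⟩⟩
  have hmemF : ∀ j, a j ∈ F ∧ b j ∈ F := by
    intro j
    rw [hbd]
    exact ⟨⟨(hmemIcc j).1, hnotmem _ ⟨j, Or.inl rfl⟩⟩, ⟨(hmemIcc j).2, hnotmem _ ⟨j, Or.inr rfl⟩⟩⟩
  have hFne : F.Nonempty := ⟨a 0, (hmemF 0).1⟩
  have hFnotΩ : ∀ y ∈ F, y ∉ Ω := by
    intro y hy
    rw [hbd] at hy
    exact hy.2
  -- tube upper bound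
  have hTupper : ∀ ε : ℝ, 0 < ε →
      volume {x ∈ Ω | Metric.infDist x F < ε} ≤
        ∑' j, ENNReal.ofReal (min ε (b j - a j)) * 2 := by
    intro ε hε
    have hcover : {x ∈ Ω | Metric.infDist x F < ε} ⊆
        ⋃ j, (Ioo (a j) (min (a j + ε) (b j)) ∪ Ioo (max (b j - ε) (a j)) (b j)) := by
      rintro x ⟨hxΩ, hxd⟩
      simp only [hΩ, mem_iUnion] at hxΩ
      obtain ⟨j, hxj⟩ := hxΩ
      rw [mem_iUnion]
      refine ⟨j, ?_⟩
      obtain ⟨y, hyF, hdist⟩ := (Metric.infDist_lt_iff hFne).1 hxd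
      have hyΩ : y ∉ Ioo (a j) (b j) := by
        intro h
        exact hFnotΩ y hyF (by rw [hΩ, mem_iUnion]; exact ⟨j, h⟩)
      rw [mem_Ioo, not_and_or, not_lt, not_lt] at hyΩ
      rw [Real.dist_eq] at hdist
      have habs1 : x - y ≤ |x - y| := le_abs_self _
      have habs2 : -(x - y) ≤ |x - y| := neg_le_abs _
      rcases hyΩ with h | h
      · left
        exact ⟨hxj.1, lt_min (by linarith) hxj.2⟩
      · right
        exact ⟨max_lt (by linarith) hxj.1, hxj.2⟩
    refine le_trans (measure_mono hcover) (le_trans (measure_iUnion_le _) ?_)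
    refine ENNReal.tsum_le_tsum (fun j => ?_)
    refine le_trans (measure_union_le _ _) ?_
    rw [Real.volume_Ioo, Real.volume_Ioo]
    have e1 : min (a j + ε) (b j) - a j = min ε (b j - a j) := by
      rcases le_total (a j + ε) (b j) with h | h
      · rw [min_eq_left h, min_eq_left (by linarith)]; ring
      · rw [min_eq_right h, min_eq_right (by linarith)]
    have e2 : b j - max (b j - ε) (a j) = min ε (b j - a j) := by
      rcases le_total (b j - ε) (a j) with h | h
      · rw [max_eq_right h, min_eq_right (by linarith)]
      · rw [max_eq_left h, min_eq_left (by linarith)]; ring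
    rw [e1, e2, mul_two]
  -- tube lower bound
  have hTlower : ∀ ε : ℝ, 0 < ε →
      (∑' j, (if b j - a j < 2*ε then ENNReal.ofReal (b j - a j) else 0)) ≤
        volume {x ∈ Ω | Metric.infDist x F < ε} := by
    intro ε hε
    classical
    set U : ℕ → Set ℝ := fun j => if b j - a j < 2*ε then Ioo (a j) (b j) else ∅ with hU
    have hUsubIoo : ∀ j, U j ⊆ Ioo (a j) (b j) := by
      intro j
      simp only [hU]
      split
      · exact subset_rfl
      · exact empty_subset _
    have hUsub : (⋃ j, U j) ⊆ {x ∈ Ω | Metric.infDist x F < ε} := by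
      intro x hx
      rw [mem_iUnion] at hx
      obtain ⟨j, hxj⟩ := hx
      by_cases hc : b j - a j < 2*ε
      · simp only [hU, if_pos hc] at hxj
        refine ⟨by rw [hΩ, mem_iUnion]; exact ⟨j, hxj⟩, ?_⟩
        have h1 := Metric.infDist_le_dist_of_mem (hmemF j).1 (x := x)
        have h2 := Metric.infDist_le_dist_of_mem (hmemF j).2 (x := x)
        rw [Real.dist_eq, abs_of_pos (by linarith [hxj.1] : (0:ℝ) < x - a j)] at h1
        rw [Real.dist_eq, abs_of_neg (by linarith [hxj.2] : x - b j < 0)] at h2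
        linarith
      · simp only [hU, if_neg hc] at hxj
        exact absurd hxj (notMem_empty x)
    have hdisjU : Pairwise (Function.onFun Disjoint U) :=
      fun i j hij => Disjoint.mono (hUsubIoo i) (hUsubIoo j) (hdisj hij)
    have hmeasU : ∀ j, MeasurableSet (U j) := by
      intro j
      simp only [hU]
      split
      · exact measurableSet_Ioo
      · exact MeasurableSet.empty
    calc (∑' j, (if b j - a j < 2*ε then ENNReal.ofReal (b j - a j) else 0))
        = ∑' j, volume (U j) := by
          refine tsum_congr (fun j => ?_)
          simp only [hU]
          rw [apply_ite volume, Real.volume_Ioo, measure_empty]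
      _ = volume (⋃ j, U j) := (measure_iUnion hdisjU hmeasU).symm
      _ ≤ _ := measure_mono hUsub
  -- direction 1: summable σ ∈ (0,1) gives finite limsup
  have hLHSmem : ∀ σ : ℝ, 0 < σ → σ < 1 → Summable (fun j => (b j - a j) ^ σ) →
      limsup (fun ε : ℝ =>
          volume {x ∈ Ω | Metric.infDist x F < ε} * ENNReal.ofReal (ε ^ (σ - 1)))
        (nhdsWithin 0 (Ioi 0)) < ⊤ := by
    intro σ hσ0 hσ1 hsml
    have hbound : ∀ ε ∈ Ioi (0:ℝ),
        volume {x ∈ Ω | Metric.infDist x F < ε} * ENNReal.ofReal (ε ^ (σ - 1)) ≤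
          ENNReal.ofReal (∑' j, (b j - a j) ^ σ) * 2 := by
      intro ε hε
      rw [mem_Ioi] at hε
      calc volume {x ∈ Ω | Metric.infDist x F < ε} * ENNReal.ofReal (ε ^ (σ - 1))
          ≤ (∑' j, ENNReal.ofReal (min ε (b j - a j)) * 2) * ENNReal.ofReal (ε ^ (σ - 1)) :=
            mul_le_mul_left (hTupper ε hε) _
        _ = ∑' j, ENNReal.ofReal (min ε (b j - a j)) * ENNReal.ofReal (ε ^ (σ - 1)) * 2 := by
            rw [ENNReal.tsum_mul_right, ENNReal.tsum_mul_right, ENNReal.tsum_mul_right]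
            ring
        _ ≤ ∑' j, ENNReal.ofReal ((b j - a j) ^ σ) * 2 := by
            refine ENNReal.tsum_le_tsum (fun j => ?_)
            refine mul_le_mul_left ?_ 2
            rw [← ENNReal.ofReal_mul (le_min hε.le (hl j).le)]
            refine ENNReal.ofReal_le_ofReal ?_
            have hm0 : 0 < min ε (b j - a j) := lt_min hε (hl j)
            have key : min ε (b j - a j) ≤ (b j - a j) ^ σ * ε ^ (1 - σ) := by
              calc min ε (b j - a j)
                  = min ε (b j - a j) ^ (σ + (1 - σ)) := by
                    rw [show σ + (1-σ) = 1 by ring, Real.rpow_one]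
                _ = min ε (b j - a j) ^ σ * min ε (b j - a j) ^ (1 - σ) :=
                    Real.rpow_add hm0 _ _
                _ ≤ (b j - a j) ^ σ * ε ^ (1 - σ) :=
                    mul_le_mul (Real.rpow_le_rpow hm0.le (min_le_right _ _) hσ0.le)
                      (Real.rpow_le_rpow hm0.le (min_le_left _ _) (by linarith))
                      (Real.rpow_nonneg hm0.le _) (Real.rpow_nonneg (hl j).le _)
            calc min ε (b j - a j) * ε ^ (σ - 1)
                ≤ (b j - a j) ^ σ * ε ^ (1 - σ) * ε ^ (σ - 1) :=
                  mul_le_mul_of_nonneg_right key (Real.rpow_nonneg hε.le _)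
              _ = (b j - a j) ^ σ := by
                  rw [mul_assoc, ← Real.rpow_add hε, show (1-σ)+(σ-1) = 0 by ring,
                    Real.rpow_zero, mul_one]
        _ = ENNReal.ofReal (∑' j, (b j - a j) ^ σ) * 2 := by
            rw [ENNReal.ofReal_tsum_of_nonneg (fun j => Real.rpow_nonneg (hl j).le σ) hsml,
              ENNReal.tsum_mul_right]
    refine lt_of_le_of_lt (limsup_le_of_le (by isBoundedDefault)
      (eventually_nhdsWithin_of_forall hbound)) ?_
    exact ENNReal.mul_lt_top ENNReal.ofReal_lt_top (by norm_num)
  -- direction 2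
  have hRHSmem : ∀ d σ : ℝ, 0 ≤ d → d < σ → σ < 1 →
      limsup (fun ε : ℝ =>
          volume {x ∈ Ω | Metric.infDist x F < ε} * ENNReal.ofReal (ε ^ (d - 1)))
        (nhdsWithin 0 (Ioi 0)) < ⊤ →
      Summable (fun j => (b j - a j) ^ σ) := by
    intro d σ hd0 hdσ hσ1 hlim
    set C : ℝ≥0∞ := (limsup (fun ε : ℝ =>
          volume {x ∈ Ω | Metric.infDist x F < ε} * ENNReal.ofReal (ε ^ (d - 1)))
        (nhdsWithin 0 (Ioi 0))) + 1 with hCdef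
    have hCne : C ≠ ⊤ := by
      rw [hCdef]
      exact ENNReal.add_ne_top.2 ⟨hlim.ne, ENNReal.one_ne_top⟩
    have hev : ∀ᶠ ε in nhdsWithin (0:ℝ) (Ioi 0),
        volume {x ∈ Ω | Metric.infDist x F < ε} * ENNReal.ofReal (ε ^ (d - 1)) < C :=
      Filter.eventually_lt_of_limsup_lt (ENNReal.lt_add_right hlim.ne one_ne_zero)
    rw [Filter.eventually_iff] at hev
    obtain ⟨ε₀, hε₀pos, hball⟩ := Metric.mem_nhdsWithin_iff.1 hev
    have hvol : ∀ ε : ℝ, 0 < ε → ε < ε₀ →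
        volume {x ∈ Ω | Metric.infDist x F < ε} ≤ C * ENNReal.ofReal (ε ^ (1 - d)) := by
      intro ε h1 h2
      have hmem : ε ∈ Metric.ball (0:ℝ) ε₀ ∩ Ioi 0 := by
        constructor
        · rw [Metric.mem_ball, Real.dist_eq, sub_zero, abs_of_pos h1]
          exact h2
        · exact h1
      have hb := hball hmem
      rw [mem_setOf_eq] at hb
      calc volume {x ∈ Ω | Metric.infDist x F < ε}
          = volume {x ∈ Ω | Metric.infDist x F < ε} * ENNReal.ofReal (ε ^ (d - 1)) *
              ENNReal.ofReal (ε ^ (1 - d)) := by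
            rw [mul_assoc, ← ENNReal.ofReal_mul (Real.rpow_nonneg h1.le _),
              ← Real.rpow_add h1, show d - 1 + (1 - d) = 0 by ring, Real.rpow_zero,
              ENNReal.ofReal_one, mul_one]
        _ ≤ C * ENNReal.ofReal (ε ^ (1 - d)) := mul_le_mul_left hb.le _
    set G : ℝ → ℝ≥0∞ :=
      fun ε => ∑' j, (if b j - a j < 2*ε then ENNReal.ofReal (b j - a j) else 0) with hGdef
    have hGsmall : ∀ ε : ℝ, 0 < ε → ε < ε₀ → G ε ≤ C * ENNReal.ofReal (ε ^ (1-d)) :=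
      fun ε h1 h2 => le_trans (hTlower ε h1) (hvol ε h1 h2)
    have hGone : ∀ ε : ℝ, G ε ≤ 1 := by
      intro ε
      have h1 : G ε ≤ ∑' j, ENNReal.ofReal (b j - a j) := by
        refine ENNReal.tsum_le_tsum (fun j => ?_)
        split
        · exact le_rfl
        · exact zero_le'
      refine h1.trans ?_
      rw [← ENNReal.ofReal_tsum_of_nonneg (fun j => (hl j).le) hsum]
      exact le_trans (ENNReal.ofReal_le_ofReal hsum1) (by simp)
    set c : ℕ → ℝ≥0∞ := fun k => ENNReal.ofReal ((2:ℝ) ^ (((k:ℝ)+1)*(1-σ))) with hcdef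
    set εs : ℕ → ℝ := fun k => (2:ℝ) ^ (-(k:ℝ)-1) with hεsdef
    have hεs_pos : ∀ k, 0 < εs k := fun k => Real.rpow_pos_of_pos (by norm_num) _
    have hεs2 : ∀ k : ℕ, 2 * εs k = (2:ℝ) ^ (-(k:ℝ)) := by
      intro k
      rw [hεsdef]
      simp only
      rw [show (-(k:ℝ)-1) = -(k:ℝ) - 1 by ring, Real.rpow_sub (by norm_num), Real.rpow_one]
      field_simp
    -- step: S ≤ ∑' k, c k * G (εs k)
    have hstep : (∑' j, ENNReal.ofReal ((b j - a j) ^ σ)) ≤ ∑' k, c k * G (εs k) := by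
      have h1 : (∑' j, ENNReal.ofReal ((b j - a j) ^ σ)) ≤
          ∑' j, ∑' k : ℕ, (if b j - a j < (2:ℝ) ^ (-(k:ℝ)) then c k * ENNReal.ofReal (b j - a j)
            else 0) :=
        ENNReal.tsum_le_tsum (fun j => aux_pointwise _ _ (hl j) (hlt1 j) hσ1)
      rw [ENNReal.tsum_comm] at h1
      refine h1.trans (le_of_eq (tsum_congr (fun k => ?_)))
      have h2 : ∀ j, (if b j - a j < (2:ℝ) ^ (-(k:ℝ)) then c k * ENNReal.ofReal (b j - a j)
          else 0) = c k * (if b j - a j < 2 * εs k then ENNReal.ofReal (b j - a j) else 0) := by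
        intro j
        rw [hεs2 k, mul_ite, mul_zero]
      rw [tsum_congr h2, ENNReal.tsum_mul_left]
    obtain ⟨k₀, hk₀⟩ := exists_pow_lt_of_lt_one hε₀pos (by norm_num : (1:ℝ)/2 < 1)
    have hεs_lt : ∀ k : ℕ, k₀ ≤ k → εs k < ε₀ := by
      intro k hk
      have h1 : εs k ≤ (2:ℝ) ^ (-(k₀:ℝ)) := by
        rw [hεsdef]
        simp only
        apply Real.rpow_le_rpow_of_exponent_le (by norm_num)
        have : (k₀:ℝ) ≤ (k:ℝ) := by exact_mod_cast hk
        linarith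
      have h2 : (2:ℝ) ^ (-(k₀:ℝ)) = ((1:ℝ)/2) ^ k₀ := by
        rw [Real.rpow_neg (by norm_num), Real.rpow_natCast, one_div, inv_pow]
      linarith [h1, h2 ▸ hk₀]
    have hck : ∀ m : ℕ, c m * ENNReal.ofReal ((εs m) ^ (1-d)) =
        ENNReal.ofReal ((2:ℝ) ^ (((m:ℝ)+1)*(d-σ))) := by
      intro m
      rw [hcdef, hεsdef]
      simp only
      rw [← ENNReal.ofReal_mul (by positivity), ← Real.rpow_mul (by norm_num : (0:ℝ) ≤ 2),
        ← Real.rpow_add (by norm_num : (0:ℝ) < 2)]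
      congr 1
      ring
    have hq1 : ENNReal.ofReal ((2:ℝ) ^ (d - σ)) < 1 := by
      rw [ENNReal.ofReal_lt_one]
      exact Real.rpow_lt_one_of_one_lt_of_neg (by norm_num) (by linarith)
    set q : ℝ≥0∞ := ENNReal.ofReal ((2:ℝ) ^ (d - σ)) with hqdef
    set E : ℝ≥0∞ := C + ENNReal.ofReal ((2:ℝ) ^ (((k₀:ℝ)+1)*(1-σ) + (k₀:ℝ)*(σ-d)))
      with hEdef
    have hEne : E ≠ ⊤ := by
      rw [hEdef]
      exact ENNReal.add_ne_top.2 ⟨hCne, ENNReal.ofReal_ne_top⟩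
    have hqk : ∀ k : ℕ, (q : ℝ≥0∞) ^ k = ENNReal.ofReal ((2:ℝ) ^ ((k:ℝ)*(d-σ))) := by
      intro k
      rw [hqdef, ← ENNReal.ofReal_pow (by positivity), ← Real.rpow_natCast ((2:ℝ)^(d-σ)) k,
        ← Real.rpow_mul (by norm_num : (0:ℝ) ≤ 2)]
      congr 1
      ring
    have hterm : ∀ k : ℕ, c k * G (εs k) ≤ E * q ^ k := by
      intro k
      rcases lt_or_ge k k₀ with hk | hk
      · calc c k * G (εs k) ≤ c k * 1 := mul_le_mul_right (hGone _) _
          _ = ENNReal.ofReal ((2:ℝ) ^ (((k:ℝ)+1)*(1-σ))) := by rw [mul_one, hcdef]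
          _ ≤ ENNReal.ofReal ((2:ℝ) ^ ((((k₀:ℝ)+1)*(1-σ) + (k₀:ℝ)*(σ-d)) + (k:ℝ)*(d-σ))) := by
              refine ENNReal.ofReal_le_ofReal ?_
              apply Real.rpow_le_rpow_of_exponent_le (by norm_num)
              have h1 : (k:ℝ) ≤ (k₀:ℝ) := by exact_mod_cast hk.le
              nlinarith [h1, hdσ, hσ1, hd0]
          _ = ENNReal.ofReal ((2:ℝ) ^ (((k₀:ℝ)+1)*(1-σ) + (k₀:ℝ)*(σ-d))) * q ^ k := by
              rw [hqk, ← ENNReal.ofReal_mul (by positivity),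
                ← Real.rpow_add (by norm_num : (0:ℝ) < 2)]
          _ ≤ E * q ^ k := mul_le_mul_left le_add_self _
      · calc c k * G (εs k)
            ≤ c k * (C * ENNReal.ofReal ((εs k) ^ (1 - d))) :=
              mul_le_mul_right (hGsmall _ (hεs_pos _) (hεs_lt k hk)) _
          _ = C * (c k * ENNReal.ofReal ((εs k) ^ (1 - d))) := by ring
          _ = C * ENNReal.ofReal ((2:ℝ) ^ (((k:ℝ)+1)*(d-σ))) := by rw [hck]
          _ ≤ C * q ^ k := by
              rw [hqk]
              refine mul_le_mul_right (ENNReal.ofReal_le_ofReal ?_) _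
              apply Real.rpow_le_rpow_of_exponent_le (by norm_num)
              have : d - σ ≤ 0 := by linarith
              nlinarith [Nat.cast_nonneg (α := ℝ) k]
          _ ≤ E * q ^ k := mul_le_mul_left le_self_add _
    have hsplit : (∑' k, c k * G (εs k)) < ⊤ := by
      calc (∑' k, c k * G (εs k)) ≤ ∑' k, E * q ^ k := ENNReal.tsum_le_tsum hterm
        _ = E * (1-q)⁻¹ := by rw [ENNReal.tsum_mul_left, ENNReal.tsum_geometric]
        _ < ⊤ := ENNReal.mul_lt_top hEne.lt_top
            (by rw [ENNReal.inv_lt_top, tsub_pos_iff_lt]; exact hq1)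
    have hfin : (∑' j, ENNReal.ofReal ((b j - a j) ^ σ)) ≠ ⊤ := (lt_of_le_of_lt hstep hsplit).ne
    have hsumm := ENNReal.summable_toReal hfin
    refine hsumm.congr (fun j => ?_)
    simp only [ENNReal.toReal_ofReal (Real.rpow_nonneg (hl j).le σ)]
  -- membership of 1 in the RHS set
  have hone_R : Summable (fun j => (b j - a j) ^ (1:ℝ)) :=
    hsum.congr (fun j => (Real.rpow_one _).symm)
  have hsummable_ge_one : ∀ σ : ℝ, 1 ≤ σ → Summable (fun j => (b j - a j) ^ σ) := by
    intro σ h1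
    refine Summable.of_nonneg_of_le (fun j => Real.rpow_nonneg (hl j).le σ) (fun j => ?_) hsum
    have := Real.rpow_le_rpow_of_exponent_ge (hl j) (hle1 j) h1
    rwa [Real.rpow_one] at this
  -- membership of 1 in the LHS set
  have hone_L : (0:ℝ) ≤ 1 ∧
      limsup (fun ε : ℝ =>
          volume {x ∈ Ω | Metric.infDist x F < ε} * ENNReal.ofReal (ε ^ ((1:ℝ) - 1)))
        (nhdsWithin 0 (Ioi 0)) < ⊤ := by
    refine ⟨zero_le_one, ?_⟩
    have hbound : ∀ ε ∈ Ioi (0:ℝ),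
        volume {x ∈ Ω | Metric.infDist x F < ε} * ENNReal.ofReal (ε ^ ((1:ℝ) - 1)) ≤ 1 := by
      intro ε hε
      rw [mem_Ioi] at hε
      rw [show (1:ℝ) - 1 = 0 by ring, Real.rpow_zero, ENNReal.ofReal_one, mul_one]
      calc volume {x ∈ Ω | Metric.infDist x F < ε} ≤ volume (Icc (0:ℝ) 1) :=
            measure_mono (le_trans (sep_subset _ _) hsub)
        _ = 1 := by rw [Real.volume_Icc]; norm_num
    refine lt_of_le_of_lt (limsup_le_of_le (by isBoundedDefault)
      (eventually_nhdsWithin_of_forall hbound)) ?_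
    exact ENNReal.one_lt_top
  -- every summability exponent is positive
  have hRpos : ∀ σ : ℝ, Summable (fun j => (b j - a j) ^ σ) → 0 < σ := by
    intro σ hS
    by_contra hσ
    push_neg at hσ
    have h1 : ∀ j, (1:ℝ) ≤ (b j - a j) ^ σ := by
      intro j
      have := Real.rpow_le_rpow_of_exponent_ge (hl j) (hle1 j) hσ
      rwa [Real.rpow_zero] at this
    have h2 := hS.tendsto_atTop_zero
    have h3 : ∀ᶠ j in atTop, (b j - a j) ^ σ < 1 := h2.eventually_lt_const one_pos
    obtain ⟨j, hj⟩ := h3.exists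
    linarith [h1 j]
  have hLbdd : BddBelow {d : ℝ | 0 ≤ d ∧
      limsup (fun ε : ℝ =>
          volume {x ∈ Ω | Metric.infDist x F < ε} * ENNReal.ofReal (ε ^ (d - 1)))
        (nhdsWithin 0 (Ioi 0)) < ⊤} := ⟨0, fun d hd => hd.1⟩
  have hRbdd : BddBelow {σ : ℝ | Summable (fun j => (b j - a j) ^ σ)} :=
    ⟨0, fun σ hσ => (hRpos σ hσ).le⟩
  apply le_antisymm
  · refine le_csInf ⟨1, hone_R⟩ (fun σ hσ => ?_)
    have hσ0 := hRpos σ hσ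
    rcases le_or_gt 1 σ with h1 | h1
    · exact le_trans (csInf_le hLbdd hone_L) h1
    · exact csInf_le hLbdd ⟨hσ0.le, hLHSmem σ hσ0 h1 hσ⟩
  · refine le_csInf ⟨1, hone_L⟩ (fun d hd => ?_)
    obtain ⟨hd0, hdlim⟩ := hd
    by_contra hcon
    push_neg at hcon
    set s := sInf {σ : ℝ | Summable (fun j => (b j - a j) ^ σ)} with hs
    have hmid1 : d < (d + s)/2 := by linarith
    have hmid2 : (d + s)/2 < s := by linarith
    have hmem : (d + s)/2 ∈ {σ : ℝ | Summable (fun j => (b j - a j) ^ σ)} := by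
      rcases le_or_gt 1 ((d + s)/2) with h1 | h1
      · exact hsummable_ge_one _ h1
      · exact hRHSmem d _ hd0 hmid1 h1 hdlim
    have := csInf_le hRbdd hmem
    rw [← hs] at this
    linarith
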